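/- Let (M_n)_{n≥0} be a sequence of positive numbers with M_0 = 1, logarithmically convex (M_n² ≤ M_{n−1}M_{n+1} for n ≥ 1) and subanalytic (there exist C₃, L > 0 with M_n ≥ C₃ L^n n^n for all n). Let p ∈ [1,∞] with conjugate exponent q, B, C₁, C, A > 0, λ ≥ 1, x > 0, and n ∈ ℕ. Let g : ℝ → ℂ be n times continuously differentiable and suppose there are locally integrable functions G_j : ℝ → (0,∞) (0 ≤ j ≤ n) with ‖g^{(j)}/G_j‖_{L^p(ℝ)} ≤ C₁ B^j M_j and ‖G_j·χ_{(-λ,λ)}‖_{L^q(ℝ)} ≤ G(λ)^j H(λ) for 0 ≤ j ≤ n, for some numbers G(λ), H(λ) > 0. Let ψ : ℝ → ℂ be an n times continuously differentiable function supported in [−1,1] with |ψ^{(j)}(t)| ≤ C A^j n^j for all t ∈ [−1,1] and all j ≤ n. Then there exists a constant C₂, depending only on C, C₁ and C₃, such that |∫_{-∞}^{∞} g(t) e^{ixt} ψ(−t/λ) dt| ≤ C₂ x^{-n} (B G(λ) + A/(Lλ))^n M_n H(λ). -/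

import Mathlib

open MeasureTheory
open scoped ENNReal

private theorem stmt18_ibp1 (F : ℝ → ℂ) (x : ℝ) (hx : x ≠ 0) (hF : ContDiff ℝ 1 F)
    (hFs : HasCompactSupport F) :
    ∫ t : ℝ, F t * Complex.exp ((x*t : ℝ) * Complex.I) =
      (-(1/((x:ℂ)*Complex.I))) * ∫ t : ℝ, deriv F t * Complex.exp ((x*t : ℝ) * Complex.I) := by
  set e : ℝ → ℂ := fun t => Complex.exp ((x*t : ℝ) * Complex.I) with he
  have hecont : Continuous e := by
    apply Complex.continuous_exp.comp
    exact (Complex.continuous_ofReal.comp (continuous_const.mul continuous_id)).mul continuous_const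
  have hede : ∀ t : ℝ, HasDerivAt e (((x:ℂ)*Complex.I) * e t) t := by
    intro t
    have h1 : HasDerivAt (fun t : ℝ => ((x*t:ℝ) * Complex.I : ℂ)) ((x:ℂ)*Complex.I) t := by
      have h0 : HasDerivAt (fun t : ℝ => ((t : ℂ))) 1 t := Complex.ofRealCLM.hasDerivAt
      have h2 := ((h0.const_mul (x:ℂ)).mul_const Complex.I)
      have : (fun t : ℝ => ((x*t:ℝ) * Complex.I : ℂ)) = fun t : ℝ => (x:ℂ) * (t:ℂ) * Complex.I := by
        funext t; push_cast; ring
      rw [this]; simpa using h2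
    have := h1.cexp
    simpa [he, mul_comm] using this
  have hFd : Differentiable ℝ F := hF.differentiable one_ne_zero
  have hφde : ∀ t : ℝ, HasDerivAt (fun t => F t * e t)
      (deriv F t * e t + F t * (((x:ℂ)*Complex.I) * e t)) t := by
    intro t
    exact ((hFd t).hasDerivAt).mul (hede t)
  have hφs : HasCompactSupport (fun t => F t * e t) := hFs.mul_right
  have hφc1 : ContDiff ℝ 1 (fun t => F t * e t) := by
    apply hF.mul
    apply Complex.contDiff_exp.comp
    exact ((Complex.ofRealCLM.contDiff).comp (contDiff_const.mul contDiff_id)).mul contDiff_const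
  have hderiv_eq : deriv (fun t => F t * e t) =
      fun t => deriv F t * e t + F t * (((x:ℂ)*Complex.I) * e t) := by
    funext t; exact (hφde t).deriv
  have hint0 : ∫ t : ℝ, deriv (fun t => F t * e t) t = 0 := by
    have hcont : Continuous (deriv (fun t => F t * e t)) := hφc1.continuous_deriv le_rfl
    have hintg : Integrable (deriv (fun t => F t * e t)) :=
      hcont.integrable_of_hasCompactSupport hφs.deriv
    have h1 := HasCompactSupport.integral_Iic_deriv_eq hφc1 hφs 0
    have h2 := HasCompactSupport.integral_Ioi_deriv_eq hφc1 hφs 0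
    rw [← integral_add_compl (measurableSet_Iic (a := (0:ℝ))) hintg]
    rw [show (Set.Iic (0:ℝ))ᶜ = Set.Ioi 0 from Set.compl_Iic, h1, h2]
    ring
  have hFe_int : Integrable (fun t => F t * e t) :=
    (hF.continuous.mul hecont).integrable_of_hasCompactSupport hφs
  have hdFe_int : Integrable (fun t => deriv F t * e t) := by
    apply ((hF.continuous_deriv le_rfl).mul hecont).integrable_of_hasCompactSupport
    exact hFs.deriv.mul_right
  have hsplit : ∫ t : ℝ, deriv (fun t => F t * e t) t =
      (∫ t : ℝ, deriv F t * e t) + ((x:ℂ)*Complex.I) * ∫ t : ℝ, F t * e t := by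
    rw [hderiv_eq]
    rw [integral_add hdFe_int]
    · congr 1
      rw [← integral_const_mul]
      congr 1; funext t; ring
    · have : (fun t => F t * (((x:ℂ)*Complex.I) * e t)) = fun t => ((x:ℂ)*Complex.I) * (F t * e t) := by
        funext t; ring
      rw [this]; exact hFe_int.const_mul _
  have hxI : ((x:ℂ)*Complex.I) ≠ 0 :=
    mul_ne_zero (Complex.ofReal_ne_zero.mpr hx) Complex.I_ne_zero
  have h0 := hint0.symm.trans hsplit
  have h3 : (∫ t : ℝ, deriv F t * e t) = -(((x:ℂ)*Complex.I)) * ∫ t : ℝ, F t * e t := by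
    linear_combination -h0
  show (∫ t : ℝ, F t * e t) = (-(1/((x:ℂ)*Complex.I))) * ∫ t : ℝ, deriv F t * e t
  rw [h3]
  field_simp
  rw [mul_div_assoc, div_self (Complex.ofReal_ne_zero.mpr hx), mul_one]

private theorem stmt18_ibpn (n : ℕ) : ∀ (F : ℝ → ℂ) (x : ℝ), x ≠ 0 → ContDiff ℝ n F →
    HasCompactSupport F →
    ∫ t : ℝ, F t * Complex.exp ((x*t : ℝ) * Complex.I) =
      (-(1/((x:ℂ)*Complex.I)))^n *
        ∫ t : ℝ, iteratedDeriv n F t * Complex.exp ((x*t:ℝ)*Complex.I) := by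
  induction n with
  | zero => intro F x hx hF hFs; simp [iteratedDeriv_zero]
  | succ n ih =>
    intro F x hx hF hFs
    have hF' : ContDiff ℝ ((n:WithTop ℕ∞) + 1) F := by exact_mod_cast hF
    have h1 : ContDiff ℝ 1 F := hF'.of_le (by
      simpa using le_add_self (a := 1) (b := (n : WithTop ℕ∞)))
    rw [stmt18_ibp1 F x hx h1 hFs]
    have hdF : ContDiff ℝ n (deriv F) := (contDiff_succ_iff_deriv.mp hF').2.2
    rw [ih (deriv F) x hx hdF hFs.deriv]
    rw [show iteratedDeriv (n+1) F = iteratedDeriv n (deriv F) from iteratedDeriv_succ']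
    ring

private theorem stmt18_holder (p q : ℝ≥0∞) (hpq : p⁻¹ + q⁻¹ = 1)
    (f : ℝ → ℂ) (G : ℝ → ℝ) (lam : ℝ)
    (hf : Continuous f) (hG : AEStronglyMeasurable G volume) (hGpos : ∀ t, 0 < G t)
    (hfint : IntegrableOn f (Set.Ioo (-lam) lam))
    (a b : ℝ) (ha : 0 ≤ a) (hb : 0 ≤ b)
    (h1 : eLpNorm (fun t => f t / (G t : ℂ)) p volume ≤ ENNReal.ofReal a)
    (h2 : eLpNorm (Set.indicator (Set.Ioo (-lam) lam) G) q volume ≤ ENNReal.ofReal b) :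
    ∫ t in Set.Ioo (-lam) lam, ‖f t‖ ≤ a * b := by
  set μ := volume.restrict (Set.Ioo (-lam) lam) with hμ
  have hfG : AEStronglyMeasurable (fun t => f t / (G t : ℂ)) volume := by
    have heq : (fun t => f t / (G t : ℂ)) = fun t => f t * ((G t)⁻¹ : ℝ) := by
      funext t; push_cast; rw [div_eq_mul_inv]
    rw [heq]
    exact hf.aestronglyMeasurable.mul
      (Complex.continuous_ofReal.comp_aestronglyMeasurable
        (hG.aemeasurable.inv).aestronglyMeasurable)
  have hstep1 : eLpNorm f 1 μ ≤
      eLpNorm (fun t => f t / (G t : ℂ)) p μ * eLpNorm G q μ := by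
    have hbd : ∀ᵐ t ∂μ, ‖(fun z (r:ℝ) => z * (r:ℂ)) ((fun t => f t / (G t : ℂ)) t) (G t)‖ ≤
        ‖f t / (G t : ℂ)‖ * ‖G t‖ := by
      filter_upwards with t
      simp [Complex.norm_real]
    have hpqr : ENNReal.HolderTriple p q 1 := ⟨by simp only [inv_one, hpq]⟩
    have := eLpNorm_le_eLpNorm_mul_eLpNorm'_of_norm (μ := μ) (p := p) (q := q) (r := 1)
      (hfG.restrict) (hG.restrict) (fun z (r:ℝ) => z * (r:ℂ)) 1 (by simpa using hbd)
    rw [ENNReal.coe_one, one_mul] at this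
    refine le_trans (le_of_eq ?_) this
    apply eLpNorm_congr_ae
    filter_upwards with t
    rw [div_mul_cancel₀]
    exact_mod_cast (hGpos t).ne'
  have hstep2 : eLpNorm (fun t => f t / (G t : ℂ)) p μ ≤ ENNReal.ofReal a :=
    le_trans (eLpNorm_mono_measure _ Measure.restrict_le_self) h1
  have hstep3 : eLpNorm G q μ ≤ ENNReal.ofReal b := by
    rw [hμ, ← eLpNorm_indicator_eq_eLpNorm_restrict measurableSet_Ioo]
    exact h2
  have hfin : eLpNorm f 1 μ ≤ ENNReal.ofReal a * ENNReal.ofReal b :=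
    hstep1.trans (mul_le_mul' hstep2 hstep3)
  have heq : ENNReal.ofReal (∫ t in Set.Ioo (-lam) lam, ‖f t‖) = eLpNorm f 1 μ := by
    rw [eLpNorm_one_eq_lintegral_enorm]
    exact ofReal_integral_norm_eq_lintegral_enorm hfint
  rw [← ENNReal.ofReal_le_ofReal_iff (by positivity), heq, ENNReal.ofReal_mul ha]
  exact hfin

private theorem stmt18_conv_aux (a : ℕ → ℝ) (ha0 : a 0 = 0)
    (hd : ∀ k, a (k+1) - a k ≤ a (k+2) - a (k+1)) :
    ∀ (n j : ℕ), j ≤ n → (n:ℝ) * a j ≤ (j:ℝ) * a n := by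
  have hmono : Monotone (fun k => a (k+1) - a k) := monotone_nat_of_le_succ hd
  have key : ∀ (n j : ℕ), j ≤ n → a j ≤ (j:ℝ) * (a (n+1) - a n) := by
    intro n j
    induction j with
    | zero => intro _; simp [ha0]
    | succ j ih =>
      intro hj
      have h1 := ih (Nat.le_of_succ_le hj)
      have h2 : a (j+1) - a j ≤ a (n+1) - a n := hmono (Nat.le_of_succ_le hj)
      push_cast
      nlinarith
  intro n
  induction n with
  | zero => intro j hj; interval_cases j; simp
  | succ n ih =>
    intro j hj
    rcases Nat.lt_or_ge j (n+1) with h | h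
    · have hj' : j ≤ n := Nat.lt_succ_iff.mp h
      have h1 := ih j hj'
      have h2 := key n j hj'
      push_cast
      push_cast at h1 h2
      nlinarith
    · have hjn : j = n+1 := le_antisymm hj h
      subst hjn
      exact le_refl _

private theorem stmt18_Mpow (Mseq : ℕ → ℝ) (hMpos : ∀ n, 0 < Mseq n) (hM0 : Mseq 0 = 1)
    (hMlc : ∀ n : ℕ, 1 ≤ n → Mseq n ^ 2 ≤ Mseq (n - 1) * Mseq (n + 1)) :
    ∀ (n j : ℕ), j ≤ n → Mseq j ^ n ≤ Mseq n ^ j := by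
  set a : ℕ → ℝ := fun k => Real.log (Mseq k) with ha
  have ha0 : a 0 = 0 := by simp [ha, hM0]
  have hd : ∀ k, a (k+1) - a k ≤ a (k+2) - a (k+1) := by
    intro k
    have h := hMlc (k+1) (Nat.le_add_left 1 k)
    simp only [Nat.add_sub_cancel] at h
    have hlog := Real.log_le_log (pow_pos (hMpos _) 2) h
    rw [Real.log_pow, Real.log_mul (hMpos k).ne' (hMpos (k+2)).ne'] at hlog
    simp only [ha]
    push_cast at hlog
    linarith
  intro n j hj
  have h := stmt18_conv_aux a ha0 hd n j hj
  have e1 : Mseq j ^ n = Real.exp ((n:ℝ) * a j) := by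
    rw [Real.exp_nat_mul, Real.exp_log (hMpos j)]
  have e2 : Mseq n ^ j = Real.exp ((j:ℝ) * a n) := by
    rw [Real.exp_nat_mul, Real.exp_log (hMpos n)]
  rw [e1, e2]
  exact Real.exp_le_exp.mpr h

private theorem stmt18_key2 (Mseq : ℕ → ℝ) (hMpos : ∀ n, 0 < Mseq n) (hM0 : Mseq 0 = 1)
    (hMlc : ∀ n : ℕ, 1 ≤ n → Mseq n ^ 2 ≤ Mseq (n - 1) * Mseq (n + 1))
    (C₃ L : ℝ) (hC₃ : 0 < C₃) (hL : 0 < L)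
    (hMsa : ∀ n : ℕ, C₃ * L ^ n * (n : ℝ) ^ n ≤ Mseq n)
    (n j : ℕ) (hj : j ≤ n) :
    (n:ℝ)^(n-j) * L^(n-j) * Mseq j ≤ max 1 C₃⁻¹ * Mseq n := by
  set K := max 1 C₃⁻¹ with hK
  have hK1 : (1:ℝ) ≤ K := le_max_left _ _
  have hKC : C₃⁻¹ ≤ K := le_max_right _ _
  have hKpos : 0 < K := lt_of_lt_of_le one_pos hK1
  rcases Nat.eq_zero_or_pos n with hn | hn
  · subst hn
    interval_cases j
    simp only [Nat.sub_self, pow_zero, one_mul, hM0, mul_one]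
    exact hK1
  · set m := n - j with hm
    have hmn : m ≤ n := Nat.sub_le n j
    have hjm : j + m = n := by omega
    apply le_of_pow_le_pow_left₀ hn.ne' (mul_pos hKpos (hMpos n)).le
    have e1 : ((n:ℝ)^m * L^m * Mseq j)^n = C₃⁻¹^m * ((C₃ * L^n * (n:ℝ)^n)^m * Mseq j ^ n) := by
      rw [mul_pow, mul_pow, mul_pow, mul_pow, ← pow_mul, ← pow_mul, ← pow_mul, ← pow_mul]
      rw [mul_comm m n]
      field_simp
      ring_nf
      rw [mul_assoc, ← mul_pow, mul_inv_cancel₀ hC₃.ne', one_pow, mul_one]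
    rw [e1]
    have h1 : (C₃ * L^n * (n:ℝ)^n)^m ≤ Mseq n ^ m :=
      pow_le_pow_left₀ (by positivity) (hMsa n) m
    have h2 : Mseq j ^ n ≤ Mseq n ^ j := stmt18_Mpow Mseq hMpos hM0 hMlc n j hj
    have h3 : (C₃ * L^n * (n:ℝ)^n)^m * Mseq j ^ n ≤ Mseq n ^ m * Mseq n ^ j :=
      mul_le_mul h1 h2 (pow_pos (hMpos j) n).le (pow_pos (hMpos n) m).le
    have h4 : Mseq n ^ m * Mseq n ^ j = Mseq n ^ n := by
      rw [← pow_add, add_comm m j, hjm]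
    have h5 : C₃⁻¹^m ≤ K^n := by
      calc C₃⁻¹^m ≤ K^m := pow_le_pow_left₀ (by positivity) hKC m
        _ ≤ K^n := pow_le_pow_right₀ hK1 hmn
    calc C₃⁻¹^m * ((C₃ * L^n * (n:ℝ)^n)^m * Mseq j ^ n)
        ≤ C₃⁻¹^m * (Mseq n ^ n) := by
          apply mul_le_mul_of_nonneg_left _ (by positivity)
          rw [← h4]; exact h3
      _ ≤ K^n * Mseq n ^ n := mul_le_mul_of_nonneg_right h5 (pow_pos (hMpos n) n).le
      _ = (K * Mseq n)^n := (mul_pow _ _ _).symm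

private theorem stmt18_termwise (c C C₁ K A bg H lam L Mj Mn nn : ℝ) (m : ℕ)
    (hc : 0 ≤ c) (hC : 0 < C) (hC₁ : 0 < C₁) (hA : 0 < A) (hbg : 0 ≤ bg) (hH : 0 < H)
    (hlam : 0 < lam) (hL : 0 < L)
    (hkey : nn^m * L^m * Mj ≤ K * Mn) :
    c * (C * A^m * nn^m * (lam⁻¹)^m) * (C₁ * bg * Mj * H) ≤
      c * bg * (A/(L*lam))^m * (C*C₁*K*Mn*H) := by
  have hLc : (L:ℝ)^m * (L⁻¹)^m = 1 := by
    rw [← mul_pow, mul_inv_cancel₀ hL.ne', one_pow]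
  have step : c * (C*A^m*nn^m*(lam⁻¹)^m) * (C₁*bg*Mj*H)
      = (c*C*C₁*bg*H*A^m*(lam⁻¹)^m*(L⁻¹)^m) * (nn^m*L^m*Mj) := by
    linear_combination -(c*C*C₁*bg*H*A^m*(lam⁻¹)^m*nn^m*Mj) * hLc
  rw [step]
  refine (mul_le_mul_of_nonneg_left hkey (by positivity)).trans (le_of_eq ?_)
  field_simp
  ring

private theorem stmt18_final_sum (Mseq : ℕ → ℝ) (hMpos : ∀ n, 0 < Mseq n) (hM0 : Mseq 0 = 1)
    (hMlc : ∀ n : ℕ, 1 ≤ n → Mseq n ^ 2 ≤ Mseq (n - 1) * Mseq (n + 1))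
    (C₃ L C C₁ : ℝ) (hC₃ : 0 < C₃) (hL : 0 < L) (hC : 0 < C) (hC₁ : 0 < C₁)
    (hMsa : ∀ n : ℕ, C₃ * L ^ n * (n : ℝ) ^ n ≤ Mseq n)
    (A B Gval Hval lam : ℝ) (hA : 0 < A) (hB : 0 < B) (hGv : 0 < Gval) (hHv : 0 < Hval)
    (hlam : 0 < lam) (n : ℕ) :
    ∑ j ∈ Finset.range (n+1), ((n.choose j : ℝ)
        * (C * A^(n-j) * (n:ℝ)^(n-j) * (lam⁻¹)^(n-j))
        * (C₁ * B^j * Mseq j * (Gval^j * Hval)))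
      ≤ (C * C₁ * max 1 C₃⁻¹) * (B*Gval + A/(L*lam))^n * Mseq n * Hval := by
  set K := max 1 C₃⁻¹ with hK
  have hstep : ∀ j ∈ Finset.range (n+1),
      (n.choose j : ℝ) * (C * A^(n-j) * (n:ℝ)^(n-j) * (lam⁻¹)^(n-j))
        * (C₁ * B^j * Mseq j * (Gval^j * Hval))
      ≤ (n.choose j : ℝ) * (B^j * Gval^j) * (A/(L*lam))^(n-j) * (C*C₁*K*Mseq n*Hval) := by
    intro j hjmem
    have hj : j ≤ n := Nat.lt_succ_iff.mp (Finset.mem_range.mp hjmem)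
    have hkey := stmt18_key2 Mseq hMpos hM0 hMlc C₃ L hC₃ hL hMsa n j hj
    have := stmt18_termwise (n.choose j : ℝ) C C₁ K A (B^j * Gval^j) Hval lam L (Mseq j) (Mseq n)
      (n:ℝ) (n-j) (by positivity) hC hC₁ hA (by positivity) hHv hlam hL hkey
    calc (n.choose j : ℝ) * (C * A^(n-j) * (n:ℝ)^(n-j) * (lam⁻¹)^(n-j))
          * (C₁ * B^j * Mseq j * (Gval^j * Hval))
        = (n.choose j : ℝ) * (C * A^(n-j) * (n:ℝ)^(n-j) * (lam⁻¹)^(n-j))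
          * (C₁ * (B^j * Gval^j) * Mseq j * Hval) := by ring
      _ ≤ (n.choose j : ℝ) * (B^j * Gval^j) * (A/(L*lam))^(n-j) * (C*C₁*K*Mseq n*Hval) := this
  refine (Finset.sum_le_sum hstep).trans (le_of_eq ?_)
  have hbin : ∑ j ∈ Finset.range (n+1),
      (n.choose j : ℝ) * (B^j * Gval^j) * (A/(L*lam))^(n-j) * (C*C₁*K*Mseq n*Hval)
      = (∑ j ∈ Finset.range (n+1), (B*Gval)^j * (A/(L*lam))^(n-j) * (n.choose j : ℝ))
        * (C*C₁*K*Mseq n*Hval) := by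
    rw [Finset.sum_mul]
    apply Finset.sum_congr rfl
    intro j _
    rw [mul_pow]
    ring
  rw [hbin, ← add_pow]
  ring

private theorem stmt18_itd_zero (f : ℝ → ℂ) (s : Set ℝ) (hs : tsupport f ⊆ s) (k : ℕ) (t : ℝ)
    (ht : t ∉ s) : iteratedDeriv k f t = 0 := by
  have h1 : iteratedFDeriv ℝ k f t = 0 :=
    image_eq_zero_of_notMem_tsupport (fun hmem => ht (hs (tsupport_iteratedFDeriv_subset k hmem)))
  rw [iteratedDeriv_eq_iteratedFDeriv, h1]
  rfl

/-- The key estimate for the class `𝒯_SA` (section 4.4): for `g` with ultradifferentiable-type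
`L^p` bounds on its derivatives and a test function `ψ` supported in `[-1,1]` with
`|ψ^{(j)}| ≤ C A^j n^j` for `j ≤ n`, one has
`|∫ g(t) e^{ixt} ψ(−t/λ) dt| ≤ C₂ x^{-n} (B G(λ) + A/(Lλ))^n M_n H(λ)`. -/
theorem stmt_18 (Mseq : ℕ → ℝ) (hMpos : ∀ n, 0 < Mseq n) (hM0 : Mseq 0 = 1)
    (hMlc : ∀ n : ℕ, 1 ≤ n → Mseq n ^ 2 ≤ Mseq (n - 1) * Mseq (n + 1))
    (C₃ L : ℝ) (hC₃ : 0 < C₃) (hL : 0 < L)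
    (hMsa : ∀ n : ℕ, C₃ * L ^ n * (n : ℝ) ^ n ≤ Mseq n)
    (p q : ℝ≥0∞) (hp : 1 ≤ p) (hq : 1 ≤ q) (hpq : p⁻¹ + q⁻¹ = 1)
    (C₁ C : ℝ) (hC₁ : 0 < C₁) (hC : 0 < C) :
    ∃ C₂ : ℝ, 0 < C₂ ∧
      ∀ (B A lam x : ℝ) (n : ℕ) (g : ℝ → ℂ) (Gs : ℕ → ℝ → ℝ) (ψ : ℝ → ℂ) (Gval Hval : ℝ),
        0 < B → 0 < A → 1 ≤ lam → 0 < x → 0 < Gval → 0 < Hval →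
        ContDiff ℝ n g →
        (∀ j ≤ n, (∀ t, 0 < Gs j t) ∧ LocallyIntegrable (Gs j) ∧
          eLpNorm (fun t => iteratedDeriv j g t / (Gs j t : ℂ)) p volume ≤
            ENNReal.ofReal (C₁ * B ^ j * Mseq j) ∧
          eLpNorm (Set.indicator (Set.Ioo (-lam) lam) (Gs j)) q volume ≤
            ENNReal.ofReal (Gval ^ j * Hval)) →
        ContDiff ℝ n ψ → tsupport ψ ⊆ Set.Icc (-1:ℝ) 1 →
        (∀ j ≤ n, ∀ t ∈ Set.Icc (-1:ℝ) 1, ‖iteratedDeriv j ψ t‖ ≤ C * A ^ j * (n : ℝ) ^ j) →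
        ‖∫ t : ℝ, g t * Complex.exp ((↑(x * t)) * Complex.I) * ψ (-t / lam)‖ ≤
          C₂ * (B * Gval + A / (L * lam)) ^ n * Mseq n * Hval / x ^ n := by
  have hKpos : (0:ℝ) < max 1 C₃⁻¹ := lt_of_lt_of_le one_pos (le_max_left _ _)
  refine ⟨C * C₁ * max 1 C₃⁻¹, by positivity, ?_⟩
  intro B A lam x n g Gs ψ Gval Hval hB hA hlam hx hGval hHval hg hGs hψ hψsupp hψb
  have hlampos : 0 < lam := lt_of_lt_of_le one_pos hlam
  have hx0 : x ≠ 0 := hx.ne'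
  set ψl : ℝ → ℂ := fun t => ψ (-lam⁻¹ * t) with hψl
  have hψlcd : ContDiff ℝ n ψl := hψ.comp (contDiff_const.mul contDiff_id)
  have hinvmem : ∀ t : ℝ, t ∉ Set.Icc (-lam) lam → (-lam⁻¹ * t) ∉ Set.Icc (-1:ℝ) 1 := by
    intro t ht hmem
    apply ht
    obtain ⟨h1, h2⟩ := hmem
    have hinv : lam * lam⁻¹ = 1 := mul_inv_cancel₀ hlampos.ne'
    constructor <;> nlinarith
  have hψlsupp : tsupport ψl ⊆ Set.Icc (-lam) lam := by
    apply closure_minimal _ isClosed_Icc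
    intro t ht
    by_contra hnot
    apply ht
    show ψ (-lam⁻¹ * t) = 0
    exact image_eq_zero_of_notMem_tsupport (fun hmem => hinvmem t hnot (hψsupp hmem))
  have hψls : HasCompactSupport ψl :=
    HasCompactSupport.intro isCompact_Icc
      (fun t ht => image_eq_zero_of_notMem_tsupport (fun hmem => ht (hψlsupp hmem)))
  have hFcd : ContDiff ℝ n (fun t => g t * ψl t) := hg.mul hψlcd
  have hFs : HasCompactSupport (fun t => g t * ψl t) := hψls.mul_left
  -- rewrite the integral
  have hint_eq : (∫ t : ℝ, g t * Complex.exp ((↑(x * t)) * Complex.I) * ψ (-t / lam))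
      = ∫ t : ℝ, (g t * ψl t) * Complex.exp ((x*t : ℝ) * Complex.I) := by
    congr 1
    funext t
    have harg : -t / lam = -lam⁻¹ * t := by ring
    rw [hψl, harg]
    ring
  rw [hint_eq, stmt18_ibpn n (fun t => g t * ψl t) x hx0 hFcd hFs, norm_mul, norm_pow]
  have hnorm : ‖(-(1/((x:ℂ)*Complex.I)))‖ = x⁻¹ := by
    rw [norm_neg, norm_div, norm_one, norm_mul, Complex.norm_I, mul_one, Complex.norm_real,
      Real.norm_eq_abs, abs_of_pos hx, one_div]
  rw [hnorm]
  set D := iteratedDeriv n (fun t => g t * ψl t) with hD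
  have hDcont : Continuous D := hFcd.continuous_iteratedDeriv n le_rfl
  have hDe_norm : ‖∫ t : ℝ, D t * Complex.exp ((x*t : ℝ) * Complex.I)‖ ≤ ∫ t : ℝ, ‖D t‖ := by
    refine (norm_integral_le_integral_norm _).trans (le_of_eq ?_)
    congr 1
    funext t
    rw [norm_mul, Complex.norm_exp_ofReal_mul_I, mul_one]
  have hFsupp : tsupport (fun t => g t * ψl t) ⊆ Set.Icc (-lam) lam := by
    refine (closure_minimal ?_ (isClosed_closure)).trans hψlsupp
    intro t ht
    apply subset_closure
    intro h0
    apply ht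
    simp [h0]
  have hD0 : ∀ t ∉ Set.Icc (-lam) lam, D t = 0 :=
    fun t ht => stmt18_itd_zero _ _ hFsupp n t ht
  have hreal1 : ∫ t : ℝ, ‖D t‖ = ∫ t in Set.Ioo (-lam) lam, ‖D t‖ := by
    have h1 : ∫ t in Set.Icc (-lam) lam, ‖D t‖ = ∫ t : ℝ, ‖D t‖ :=
      setIntegral_eq_integral_of_forall_compl_eq_zero
        (fun t ht => by rw [hD0 t ht, norm_zero])
    rw [← h1, integral_Icc_eq_integral_Ioo]
  -- pointwise Leibniz bound
  have hψlb : ∀ k, k ≤ n → ∀ t : ℝ, ‖iteratedDeriv k ψl t‖ ≤ C * A^k * (n:ℝ)^k * (lam⁻¹)^k := by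
    intro k hk t
    have hψk : ContDiff ℝ k ψ := hψ.of_le (by exact_mod_cast hk)
    have hrw := iteratedDeriv_comp_const_smul hψk (-lam⁻¹)
    calc ‖iteratedDeriv k ψl t‖ = ‖(-lam⁻¹)^k • iteratedDeriv k ψ (-lam⁻¹*t)‖ := by
          rw [hψl]
          rw [congrFun hrw t]
      _ = (lam⁻¹)^k * ‖iteratedDeriv k ψ (-lam⁻¹*t)‖ := by
          rw [norm_smul, norm_pow, Real.norm_eq_abs, abs_neg,
            abs_of_pos (inv_pos.mpr hlampos)]
      _ ≤ (lam⁻¹)^k * (C * A^k * (n:ℝ)^k) := by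
          apply mul_le_mul_of_nonneg_left _ (by positivity)
          by_cases hmem : (-lam⁻¹*t) ∈ Set.Icc (-1:ℝ) 1
          · exact hψb k hk _ hmem
          · rw [stmt18_itd_zero ψ _ hψsupp k _ hmem, norm_zero]
            positivity
      _ = C * A^k * (n:ℝ)^k * (lam⁻¹)^k := by ring
  have hpoint : ∀ t : ℝ, ‖D t‖ ≤ ∑ j ∈ Finset.range (n+1),
      (n.choose j:ℝ) * ‖iteratedDeriv j g t‖
        * (C * A^(n-j) * (n:ℝ)^(n-j) * (lam⁻¹)^(n-j)) := by
    intro t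
    have h := norm_iteratedFDeriv_mul_le (𝕜 := ℝ) hg hψlcd t (le_refl (n : WithTop ℕ∞))
    rw [hD, ← norm_iteratedFDeriv_eq_norm_iteratedDeriv]
    refine h.trans (Finset.sum_le_sum ?_)
    intro j hj
    rw [norm_iteratedFDeriv_eq_norm_iteratedDeriv, norm_iteratedFDeriv_eq_norm_iteratedDeriv]
    rw [mul_assoc, mul_assoc]
    apply mul_le_mul_of_nonneg_left _ (by positivity)
    exact mul_le_mul_of_nonneg_left (hψlb (n-j) (Nat.sub_le n j) t) (norm_nonneg _)
  -- integrability
  have hgjcont : ∀ j, j ≤ n → Continuous (iteratedDeriv j g) :=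
    fun j hj => hg.continuous_iteratedDeriv j (by exact_mod_cast hj)
  have hgjint : ∀ j, j ≤ n → IntegrableOn (iteratedDeriv j g) (Set.Ioo (-lam) lam) :=
    fun j hj => ((hgjcont j hj).integrableOn_Icc).mono_set Set.Ioo_subset_Icc_self
  have hDint : IntegrableOn (fun t => ‖D t‖) (Set.Ioo (-lam) lam) :=
    (hDcont.norm.integrableOn_Icc).mono_set Set.Ioo_subset_Icc_self
  have hsumint : ∀ j ∈ Finset.range (n+1), IntegrableOn
      (fun t => (n.choose j:ℝ) * ‖iteratedDeriv j g t‖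
        * (C * A^(n-j) * (n:ℝ)^(n-j) * (lam⁻¹)^(n-j))) (Set.Ioo (-lam) lam) := by
    intro j hj
    exact (((hgjint j (Nat.lt_succ_iff.mp (Finset.mem_range.mp hj))).norm.const_mul
      ((n.choose j : ℝ))).mul_const _)
  have hle2 : ∫ t in Set.Ioo (-lam) lam, ‖D t‖ ≤
      ∑ j ∈ Finset.range (n+1), ((n.choose j:ℝ)
        * (C * A^(n-j) * (n:ℝ)^(n-j) * (lam⁻¹)^(n-j))
        * (C₁ * B^j * Mseq j * (Gval^j * Hval))) := by
    calc ∫ t in Set.Ioo (-lam) lam, ‖D t‖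
        ≤ ∫ t in Set.Ioo (-lam) lam, ∑ j ∈ Finset.range (n+1),
            (n.choose j:ℝ) * ‖iteratedDeriv j g t‖
              * (C * A^(n-j) * (n:ℝ)^(n-j) * (lam⁻¹)^(n-j)) := by
          apply setIntegral_mono_on hDint (integrable_finset_sum _ hsumint)
            measurableSet_Ioo
          intro t _
          exact hpoint t
      _ = ∑ j ∈ Finset.range (n+1), ∫ t in Set.Ioo (-lam) lam,
            (n.choose j:ℝ) * ‖iteratedDeriv j g t‖
              * (C * A^(n-j) * (n:ℝ)^(n-j) * (lam⁻¹)^(n-j)) :=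
          integral_finset_sum _ hsumint
      _ ≤ ∑ j ∈ Finset.range (n+1), ((n.choose j:ℝ)
            * (C * A^(n-j) * (n:ℝ)^(n-j) * (lam⁻¹)^(n-j))
            * (C₁ * B^j * Mseq j * (Gval^j * Hval))) := by
          apply Finset.sum_le_sum
          intro j hjmem
          have hj : j ≤ n := Nat.lt_succ_iff.mp (Finset.mem_range.mp hjmem)
          obtain ⟨hGpos, hGloc, hGe1, hGe2⟩ := hGs j hj
          have hH := stmt18_holder p q hpq (iteratedDeriv j g) (Gs j) lam
            (hgjcont j hj) hGloc.aestronglyMeasurable hGpos (hgjint j hj)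
            (C₁ * B^j * Mseq j) (Gval^j * Hval)
            (mul_pos (mul_pos hC₁ (pow_pos hB j)) (hMpos j)).le
            (mul_pos (pow_pos hGval j) hHval).le hGe1 hGe2
          have heqi : (fun t => (n.choose j:ℝ) * ‖iteratedDeriv j g t‖
              * (C * A^(n-j) * (n:ℝ)^(n-j) * (lam⁻¹)^(n-j)))
              = fun t => ((n.choose j:ℝ) * (C * A^(n-j) * (n:ℝ)^(n-j) * (lam⁻¹)^(n-j)))
                * ‖iteratedDeriv j g t‖ := by
            funext t; ring
          rw [heqi, integral_const_mul]
          calc ((n.choose j:ℝ) * (C * A^(n-j) * (n:ℝ)^(n-j) * (lam⁻¹)^(n-j)))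
                * ∫ t in Set.Ioo (-lam) lam, ‖iteratedDeriv j g t‖
              ≤ ((n.choose j:ℝ) * (C * A^(n-j) * (n:ℝ)^(n-j) * (lam⁻¹)^(n-j)))
                * ((C₁ * B^j * Mseq j) * (Gval^j * Hval)) :=
                mul_le_mul_of_nonneg_left hH (by positivity)
            _ = (n.choose j:ℝ) * (C * A^(n-j) * (n:ℝ)^(n-j) * (lam⁻¹)^(n-j))
                * (C₁ * B^j * Mseq j * (Gval^j * Hval)) := by ring
  have hfs := stmt18_final_sum Mseq hMpos hM0 hMlc C₃ L C C₁ hC₃ hL hC hC₁ hMsa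
    A B Gval Hval lam hA hB hGval hHval hlampos n
  have htotal : ‖∫ t : ℝ, D t * Complex.exp ((x*t : ℝ) * Complex.I)‖ ≤
      (C * C₁ * max 1 C₃⁻¹) * (B*Gval + A/(L*lam))^n * Mseq n * Hval := by
    refine hDe_norm.trans ?_
    rw [hreal1]
    exact hle2.trans hfs
  calc (x⁻¹)^n * ‖∫ t : ℝ, D t * Complex.exp ((x*t : ℝ) * Complex.I)‖
      ≤ (x⁻¹)^n * ((C * C₁ * max 1 C₃⁻¹) * (B*Gval + A/(L*lam))^n * Mseq n * Hval) :=
        mul_le_mul_of_nonneg_left htotal (by positivity)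
    _ = C * C₁ * max 1 C₃⁻¹ * (B * Gval + A / (L * lam)) ^ n * Mseq n * Hval / x ^ n := by
        rw [inv_pow]
        ring
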